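/- arXiv:1801.08469 — 3 statements merged into one kernel-verified Lean document; each statement's English description precedes it below -/
import Mathlib

section
/- For every y, z, t > 0, the convolution integral ∫₀ᵗ (y·exp(−y²/(2u))/√(2πu³)) · (z·exp(−z²/(2(t−u)))/√(2π(t−u)³)) du equals (y+z)·exp(−(y+z)²/(2t))/√(2πt³). -/
open Real MeasureTheory Filter Set Topology intervalIntegral

noncomputable def levyN (x : ℝ) : ℝ := ∫ s in (0:ℝ)..x, Real.exp (-s^2/2)

lemma gauss_eq : (fun s : ℝ => Real.exp (-s^2/2)) = fun s => Real.exp (-(1/2) * s^2) := by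
  funext s; ring_nf

lemma gauss_integrable : Integrable (fun s : ℝ => Real.exp (-s^2/2)) := by
  rw [gauss_eq]; exact integrable_exp_neg_mul_sq (by norm_num)

lemma levyN_hasDerivAt (x : ℝ) : HasDerivAt levyN (Real.exp (-x^2/2)) x :=
  intervalIntegral.integral_hasDerivAt_right
    (gauss_integrable.intervalIntegrable)
    (gauss_integrable.aestronglyMeasurable.stronglyMeasurableAtFilter)
    (Continuous.continuousAt (by continuity))

lemma levyN_tendsto_atTop : Tendsto levyN atTop (𝓝 (Real.sqrt (2*π) / 2)) := by
  have h := intervalIntegral_tendsto_integral_Ioi (0:ℝ)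
    (gauss_integrable.integrableOn) tendsto_id
  have : ∫ s in Ioi (0:ℝ), Real.exp (-s^2/2) = Real.sqrt (2*π) / 2 := by
    rw [gauss_eq]
    rw [integral_gaussian_Ioi (1/2)]
    rw [show π / (1/2 : ℝ) = 2 * π by ring]
  rwa [this] at h

lemma levyN_neg (x : ℝ) : levyN (-x) = - levyN x := by
  unfold levyN
  have : ∫ s in (0:ℝ)..(-x), Real.exp (-s^2/2)
      = ∫ s in (0:ℝ)..(-x), Real.exp (-(-s)^2/2) := by
    refine intervalIntegral.integral_congr fun s _ => by ring_nf
  rw [this, intervalIntegral.integral_comp_neg (fun s => Real.exp (-s^2/2)), neg_zero,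
    intervalIntegral.integral_symm, neg_neg]

lemma levyN_tendsto_atBot : Tendsto levyN atBot (𝓝 (-(Real.sqrt (2*π) / 2))) := by
  have h : Tendsto (fun x => - levyN (-x)) atBot (𝓝 (-(Real.sqrt (2*π) / 2))) :=
    (levyN_tendsto_atTop.comp tendsto_neg_atBot_atTop).neg
  refine h.congr fun x => by rw [levyN_neg, neg_neg]

lemma sqrt_two_pi_cube {u : ℝ} (hu : 0 ≤ u) :
    Real.sqrt (2*π*u^3) = Real.sqrt (2*π) * Real.sqrt u ^ 3 := by
  rw [Real.sqrt_mul (by positivity)]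
  congr 1
  have h : (Real.sqrt u ^ 3)^2 = u^3 := by
    rw [show (Real.sqrt u ^ 3)^2 = (Real.sqrt u ^ 2)^3 by ring, Real.sq_sqrt hu]
  calc Real.sqrt (u^3) = Real.sqrt ((Real.sqrt u ^ 3)^2) := by rw [h]
    _ = Real.sqrt u ^ 3 := Real.sqrt_sq (by positivity)

lemma levyPhi_tendsto_zero {a : ℝ} (ha : 0 < a) :
    Tendsto (fun u : ℝ => a * Real.exp (-(a^2) / (2*u)) / Real.sqrt (2*π*u^3))
      (𝓝[>] (0:ℝ)) (𝓝 0) := by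
  have h1 : Tendsto (fun x : ℝ => x ^ (3/2 : ℝ) * Real.exp (-(a^2/2) * x)) atTop (𝓝 0) :=
    tendsto_rpow_mul_exp_neg_mul_atTop_nhds_zero _ _ (by positivity)
  have h2 : Tendsto (fun u : ℝ => u⁻¹) (𝓝[>] (0:ℝ)) atTop := tendsto_inv_nhdsGT_zero
  have h3 := (h1.comp h2).const_mul (a / Real.sqrt (2*π))
  rw [mul_zero] at h3
  refine h3.congr' ?_
  filter_upwards [self_mem_nhdsWithin] with u (hu : 0 < u)
  have hsu : (0:ℝ) < Real.sqrt u := Real.sqrt_pos.2 hu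
  have hsp : (0:ℝ) < Real.sqrt (2*π) := Real.sqrt_pos.2 (by positivity)
  have hinv : (u⁻¹ : ℝ) ^ (3/2 : ℝ) = (Real.sqrt u ^ 3)⁻¹ := by
    rw [Real.inv_rpow hu.le]
    congr 1
    rw [Real.sqrt_eq_rpow, ← Real.rpow_natCast (u ^ ((1:ℝ)/2)) 3, ← Real.rpow_mul hu.le]
    norm_num
  have hexp : Real.exp (-(a^2/2) * u⁻¹) = Real.exp (-(a^2) / (2*u)) := by
    congr 1; field_simp
  simp only [Function.comp, hinv, hexp, sqrt_two_pi_cube hu.le]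
  field_simp

lemma levyPhi_continuousOn {a : ℝ} (ha : 0 < a) :
    ContinuousOn (fun u : ℝ => a * Real.exp (-(a^2) / (2*u)) / Real.sqrt (2*π*u^3))
      (Ici 0) := by
  intro u hu
  rcases eq_or_lt_of_le (mem_Ici.1 hu) with h0 | h0
  · -- u = 0
    subst h0
    have hval : a * Real.exp (-(a^2) / (2*(0:ℝ))) / Real.sqrt (2*π*(0:ℝ)^3) = 0 := by
      norm_num
    rw [ContinuousWithinAt, hval]
    have : Ici (0:ℝ) = {0} ∪ Ioi 0 := by
      ext x; simp [le_iff_lt_or_eq, or_comm, eq_comm]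
    rw [this, nhdsWithin_union]
    rw [tendsto_sup]
    constructor
    · rw [nhdsWithin_singleton]
      have h := tendsto_pure_nhds
        (fun u : ℝ => a * Real.exp (-(a^2) / (2*u)) / Real.sqrt (2*π*u^3)) 0
      rwa [hval] at h
    · exact levyPhi_tendsto_zero ha
  · -- u > 0
    refine ContinuousAt.continuousWithinAt ?_
    have h1 : ContinuousAt (fun u : ℝ => a * Real.exp (-(a^2) / (2*u))) u := by
      refine (continuousAt_const.mul (Real.continuous_exp.continuousAt.comp ?_))
      exact continuousAt_const.div (continuousAt_const.mul continuousAt_id) (by positivity)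
    refine h1.div ((Real.continuous_sqrt.continuousAt).comp ?_) ?_
    · exact continuousAt_const.mul (continuousAt_id.pow 3)
    · have : (0:ℝ) < Real.sqrt (2*π*u^3) := Real.sqrt_pos.2 (by positivity)
      exact ne_of_gt this

lemma levy_deriv (y z t : ℝ) (hy : 0 < y) (hz : 0 < z) (ht : 0 < t) {u : ℝ}
    (hu : 0 < u) (hut : u < t) :
    HasDerivAt (fun v => Real.exp (-((y+z)^2)/(2*t)) / (2*π*Real.sqrt t^3) *
      ((y+z) * levyN ((z*v - y*(t-v))/Real.sqrt (t*v*(t-v))) +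
       (y-z) * Real.exp (2*y*z/t) * levyN ((z*v + y*(t-v))/Real.sqrt (t*v*(t-v)))))
      ((y * Real.exp (-(y ^ 2) / (2 * u)) / Real.sqrt (2 * π * u ^ 3)) *
        (z * Real.exp (-(z ^ 2) / (2 * (t - u))) / Real.sqrt (2 * π * (t - u) ^ 3))) u := by
  have htu : 0 < t - u := by linarith
  have hq : (0:ℝ) < t*u*(t-u) := by positivity
  have hsq : (0:ℝ) < Real.sqrt (t*u*(t-u)) := Real.sqrt_pos.2 hq
  have hq' : HasDerivAt (fun v : ℝ => t*v*(t-v)) (t*(t-u) - t*u) u := by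
    have h1 : HasDerivAt (fun v:ℝ => t*v) t u := by simpa using (hasDerivAt_id u).const_mul t
    have h2 : HasDerivAt (fun v:ℝ => t - v) (-1) u := by
      simpa using (hasDerivAt_id u).const_sub t
    have h3 := h1.mul h2
    exact h3.congr_deriv (by ring)
  have hs : HasDerivAt (fun v : ℝ => Real.sqrt (t*v*(t-v)))
      ((t*(t-u) - t*u) / (2 * Real.sqrt (t*u*(t-u)))) u := hq'.sqrt (ne_of_gt hq)
  have hnumα : HasDerivAt (fun v : ℝ => z*v - y*(t-v)) (z + y) u := by
    have h1 : HasDerivAt (fun v:ℝ => z*v) z u := by simpa using (hasDerivAt_id u).const_mul z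
    have h2 : HasDerivAt (fun v:ℝ => y*(t-v)) (-y) u := by
      have := ((hasDerivAt_const u t).sub (hasDerivAt_id u)).const_mul y
      simpa using this
    exact (h1.sub h2).congr_deriv (by ring)
  have hnumγ : HasDerivAt (fun v : ℝ => z*v + y*(t-v)) (z - y) u := by
    have h1 : HasDerivAt (fun v:ℝ => z*v) z u := by simpa using (hasDerivAt_id u).const_mul z
    have h2 : HasDerivAt (fun v:ℝ => y*(t-v)) (-y) u := by
      have := ((hasDerivAt_const u t).sub (hasDerivAt_id u)).const_mul y
      simpa using this
    exact (h1.add h2).congr_deriv (by ring)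
  have hα := hnumα.div hs (ne_of_gt hsq)
  have hγ := hnumγ.div hs (ne_of_gt hsq)
  have hNα := (levyN_hasDerivAt _).comp u hα
  have hNγ := (levyN_hasDerivAt _).comp u hγ
  have hF := ((hNα.const_mul (y+z)).add (hNγ.const_mul ((y-z) * Real.exp (2*y*z/t)))).const_mul
      (Real.exp (-((y+z)^2)/(2*t)) / (2*π*Real.sqrt t^3))
  refine hF.congr_deriv (Eq.symm ?_); simp only [Pi.div_apply]

  have hexp1 : Real.exp (-(y+z)^2/(2*t)) *
      Real.exp (-((z*u - y*(t-u))/Real.sqrt (t*u*(t-u)))^2/2)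
      = Real.exp (-y^2/(2*u)) * Real.exp (-z^2/(2*(t-u))) := by
    rw [div_pow, Real.sq_sqrt hq.le, ← Real.exp_add, ← Real.exp_add]
    congr 1
    field_simp
    ring
  have hexp2 : Real.exp (-(y+z)^2/(2*t)) * (Real.exp (2*y*z/t) *
      Real.exp (-((z*u + y*(t-u))/Real.sqrt (t*u*(t-u)))^2/2))
      = Real.exp (-y^2/(2*u)) * Real.exp (-z^2/(2*(t-u))) := by
    rw [div_pow, Real.sq_sqrt hq.le, ← Real.exp_add, ← Real.exp_add, ← Real.exp_add]
    congr 1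
    field_simp
    ring
  have key : ∀ DA DG : ℝ,
      Real.exp (-(y+z)^2/(2*t)) / (2*π*Real.sqrt t^3) *
        ((y+z) * (Real.exp (-((z*u - y*(t-u))/Real.sqrt (t*u*(t-u)))^2/2) * DA) +
         (y-z) * Real.exp (2*y*z/t) *
           (Real.exp (-((z*u + y*(t-u))/Real.sqrt (t*u*(t-u)))^2/2) * DG))
      = Real.exp (-y^2/(2*u)) * Real.exp (-z^2/(2*(t-u))) *
          (((y+z) * DA + (y-z) * DG) / (2*π*Real.sqrt t^3)) := by
    intro DA DG
    calc Real.exp (-(y+z)^2/(2*t)) / (2*π*Real.sqrt t^3) *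
        ((y+z) * (Real.exp (-((z*u - y*(t-u))/Real.sqrt (t*u*(t-u)))^2/2) * DA) +
         (y-z) * Real.exp (2*y*z/t) *
           (Real.exp (-((z*u + y*(t-u))/Real.sqrt (t*u*(t-u)))^2/2) * DG))
        = (Real.exp (-(y+z)^2/(2*t)) *
            Real.exp (-((z*u - y*(t-u))/Real.sqrt (t*u*(t-u)))^2/2)) *
            ((y+z) * DA / (2*π*Real.sqrt t^3))
          + (Real.exp (-(y+z)^2/(2*t)) * (Real.exp (2*y*z/t) *
            Real.exp (-((z*u + y*(t-u))/Real.sqrt (t*u*(t-u)))^2/2))) *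
            ((y-z) * DG / (2*π*Real.sqrt t^3)) := by ring
      _ = _ := by rw [hexp1, hexp2]; ring
  rw [key]
  rw [sqrt_two_pi_cube hu.le, sqrt_two_pi_cube htu.le]
  rw [show Real.sqrt (t*u*(t-u)) = Real.sqrt t * Real.sqrt u * Real.sqrt (t-u) by
    rw [Real.sqrt_mul (by positivity : (0:ℝ) ≤ t*u), Real.sqrt_mul ht.le]]
  set sp := Real.sqrt (2*π) with hspdef
  set st := Real.sqrt t with hstdef
  set su := Real.sqrt u with hsudef
  set sv := Real.sqrt (t-u) with hsvdef
  have hsp2 : sp^2 = 2*π := Real.sq_sqrt (by positivity)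
  have hst2 : st^2 = t := Real.sq_sqrt ht.le
  have hsu2 : su^2 = u := Real.sq_sqrt hu.le
  have hsv2 : sv^2 = t - u := Real.sq_sqrt htu.le
  have hsp0 : sp ≠ 0 := by rw [hspdef]; positivity
  have hst0 : st ≠ 0 := by rw [hstdef]; positivity
  have hsu0 : su ≠ 0 := by rw [hsudef]; positivity
  have hsv0 : sv ≠ 0 := by rw [hsvdef]; positivity
  rw [← hsp2, ← hst2, ← hsu2]
  rw [show st^2 - su^2 = sv^2 by rw [hst2, hsu2, hsv2]]
  have hrel : su^2 + sv^2 = st^2 := by rw [hsu2, hsv2, hst2]; ring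
  have hDa : ((z + y) * (st * su * sv) -
        (z * su ^ 2 - y * sv ^ 2) * ((st ^ 2 * sv ^ 2 - st ^ 2 * su ^ 2) / (2 * (st * su * sv)))) /
        (st * su * sv) ^ 2
      = (su^2 + sv^2) * (z * su^2 + y * sv^2) / (2 * st * su^3 * sv^3) := by
    field_simp
    ring
  have hDg : ((z - y) * (st * su * sv) -
        (z * su ^ 2 + y * sv ^ 2) * ((st ^ 2 * sv ^ 2 - st ^ 2 * su ^ 2) / (2 * (st * su * sv)))) /
        (st * su * sv) ^ 2
      = (su^2 + sv^2) * (z * su^2 - y * sv^2) / (2 * st * su^3 * sv^3) := by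
    field_simp
    ring
  rw [hrel] at hDa hDg
  rw [hDa, hDg]
  have hsum : (y + z) * (st^2 * (z * su^2 + y * sv^2) / (2 * st * su^3 * sv^3)) +
      (y - z) * (st^2 * (z * su^2 - y * sv^2) / (2 * st * su^3 * sv^3))
      = st^2 * (y * z * (su^2 + sv^2)) / (st * su^3 * sv^3) := by
    field_simp
    ring
  rw [hrel] at hsum
  rw [hsum]
  field_simp

/-- Convolution identity for Lévy (inverse Gaussian first-passage) densities. -/
theorem levy_density_convolution (y z t : ℝ) (hy : 0 < y) (hz : 0 < z) (ht : 0 < t) :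
    ∫ u in (0:ℝ)..t,
      (y * Real.exp (-(y ^ 2) / (2 * u)) / Real.sqrt (2 * π * u ^ 3)) *
        (z * Real.exp (-(z ^ 2) / (2 * (t - u))) / Real.sqrt (2 * π * (t - u) ^ 3)) =
      (y + z) * Real.exp (-((y + z) ^ 2) / (2 * t)) / Real.sqrt (2 * π * t ^ 3) := by
  -- integrability
  have hint : IntervalIntegrable (fun u : ℝ =>
      (y * Real.exp (-(y ^ 2) / (2 * u)) / Real.sqrt (2 * π * u ^ 3)) *
        (z * Real.exp (-(z ^ 2) / (2 * (t - u))) / Real.sqrt (2 * π * (t - u) ^ 3)))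
      volume 0 t := by
    apply ContinuousOn.intervalIntegrable
    rw [uIcc_of_le ht.le]
    refine ContinuousOn.mul ((levyPhi_continuousOn hy).mono fun x hx => hx.1) ?_
    exact (levyPhi_continuousOn hz).comp
      ((continuous_const.sub continuous_id).continuousOn)
      (fun x hx => by simp only [mem_Ici]; simp; linarith [hx.2])
  -- limits of sqrt factor
  have hsqrt0 : Tendsto (fun u : ℝ => Real.sqrt (t*u*(t-u))) (𝓝[>] (0:ℝ)) (𝓝[>] 0) := by
    rw [tendsto_nhdsWithin_iff]
    constructor
    · have hc : Continuous fun u : ℝ => Real.sqrt (t*u*(t-u)) :=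
        Real.continuous_sqrt.comp ((continuous_const.mul continuous_id).mul
          (continuous_const.sub continuous_id))
      have h := hc.tendsto 0
      simp only [mul_zero, zero_mul, Real.sqrt_zero] at h
      exact h.mono_left nhdsWithin_le_nhds
    · filter_upwards [Ioo_mem_nhdsGT_of_mem (left_mem_Ico.2 ht)] with u hu
      exact Real.sqrt_pos.2 (mul_pos (mul_pos ht hu.1) (sub_pos.2 hu.2))
  have hsqrtt : Tendsto (fun u : ℝ => Real.sqrt (t*u*(t-u))) (𝓝[<] t) (𝓝[>] 0) := by
    rw [tendsto_nhdsWithin_iff]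
    constructor
    · have hc : Continuous fun u : ℝ => Real.sqrt (t*u*(t-u)) :=
        Real.continuous_sqrt.comp ((continuous_const.mul continuous_id).mul
          (continuous_const.sub continuous_id))
      have h := hc.tendsto t
      simp only [sub_self, mul_zero, Real.sqrt_zero] at h
      exact h.mono_left nhdsWithin_le_nhds
    · filter_upwards [Ioo_mem_nhdsLT_of_mem (right_mem_Ioc.2 ht)] with u hu
      exact Real.sqrt_pos.2 (mul_pos (mul_pos ht hu.1) (sub_pos.2 hu.2))
  have hinv0 := tendsto_inv_nhdsGT_zero.comp hsqrt0
  have hinvt := tendsto_inv_nhdsGT_zero.comp hsqrtt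
  -- limits of α and γ
  have hnumc1 : Continuous (fun u : ℝ => z*u - y*(t-u)) :=
    (continuous_const.mul continuous_id).sub
      (continuous_const.mul (continuous_const.sub continuous_id))
  have hnumc2 : Continuous (fun u : ℝ => z*u + y*(t-u)) :=
    (continuous_const.mul continuous_id).add
      (continuous_const.mul (continuous_const.sub continuous_id))
  have hα0 : Tendsto (fun u : ℝ => (z*u - y*(t-u))/Real.sqrt (t*u*(t-u))) (𝓝[>] (0:ℝ)) atBot := by
    simp only [div_eq_mul_inv]
    refine Tendsto.neg_mul_atTop (C := z*0 - y*(t-0)) (by nlinarith) ?_ hinv0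
    exact (hnumc1.tendsto 0).mono_left nhdsWithin_le_nhds
  have hγ0 : Tendsto (fun u : ℝ => (z*u + y*(t-u))/Real.sqrt (t*u*(t-u))) (𝓝[>] (0:ℝ)) atTop := by
    simp only [div_eq_mul_inv]
    refine Tendsto.pos_mul_atTop (C := z*0 + y*(t-0)) (by nlinarith) ?_ hinv0
    exact (hnumc2.tendsto 0).mono_left nhdsWithin_le_nhds
  have hαt : Tendsto (fun u : ℝ => (z*u - y*(t-u))/Real.sqrt (t*u*(t-u))) (𝓝[<] t) atTop := by
    simp only [div_eq_mul_inv]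
    refine Tendsto.pos_mul_atTop (C := z*t - y*(t-t)) (by nlinarith) ?_ hinvt
    exact (hnumc1.tendsto t).mono_left nhdsWithin_le_nhds
  have hγt : Tendsto (fun u : ℝ => (z*u + y*(t-u))/Real.sqrt (t*u*(t-u))) (𝓝[<] t) atTop := by
    simp only [div_eq_mul_inv]
    refine Tendsto.pos_mul_atTop (C := z*t + y*(t-t)) (by nlinarith) ?_ hinvt
    exact (hnumc2.tendsto t).mono_left nhdsWithin_le_nhds
  -- limits of F
  have hF0 : Tendsto (fun v => Real.exp (-((y+z)^2)/(2*t)) / (2*π*Real.sqrt t^3) *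
      ((y+z) * levyN ((z*v - y*(t-v))/Real.sqrt (t*v*(t-v))) +
       (y-z) * Real.exp (2*y*z/t) * levyN ((z*v + y*(t-v))/Real.sqrt (t*v*(t-v)))))
      (𝓝[>] (0:ℝ))
      (𝓝 (Real.exp (-((y+z)^2)/(2*t)) / (2*π*Real.sqrt t^3) *
        ((y+z) * (-(Real.sqrt (2*π)/2)) + (y-z) * Real.exp (2*y*z/t) * (Real.sqrt (2*π)/2)))) := by
    exact (((levyN_tendsto_atBot.comp hα0).const_mul (y+z)).add
      ((levyN_tendsto_atTop.comp hγ0).const_mul ((y-z) * Real.exp (2*y*z/t)))).const_mul _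
  have hFt : Tendsto (fun v => Real.exp (-((y+z)^2)/(2*t)) / (2*π*Real.sqrt t^3) *
      ((y+z) * levyN ((z*v - y*(t-v))/Real.sqrt (t*v*(t-v))) +
       (y-z) * Real.exp (2*y*z/t) * levyN ((z*v + y*(t-v))/Real.sqrt (t*v*(t-v)))))
      (𝓝[<] t)
      (𝓝 (Real.exp (-((y+z)^2)/(2*t)) / (2*π*Real.sqrt t^3) *
        ((y+z) * (Real.sqrt (2*π)/2) + (y-z) * Real.exp (2*y*z/t) * (Real.sqrt (2*π)/2)))) := by
    exact (((levyN_tendsto_atTop.comp hαt).const_mul (y+z)).add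
      ((levyN_tendsto_atTop.comp hγt).const_mul ((y-z) * Real.exp (2*y*z/t)))).const_mul _
  have hFTC := intervalIntegral.integral_eq_sub_of_hasDerivAt_of_tendsto ht
    (fun x hx => levy_deriv y z t hy hz ht hx.1 hx.2) hint hF0 hFt
  rw [hFTC]
  rw [sqrt_two_pi_cube ht.le]
  have hsp0 : Real.sqrt (2*π) ≠ 0 := by positivity
  have hst0 : Real.sqrt t ≠ 0 := by positivity
  rw [show (2:ℝ)*π = Real.sqrt (2*π)^2 from (Real.sq_sqrt (by positivity)).symm]
  field_simp
  rw [Real.sqrt_sq (Real.sqrt_nonneg _)]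
  ring
end

section
/- For every y, t > 0, ∫₀ᵗ (y·exp(−y²/(2u))/√(2πu³)) · (1/√(2π(t−u))) du = exp(−y²/(2t))/√(2πt). -/
open Real Filter MeasureTheory Set intervalIntegral

private lemma gauss_cont : Continuous (fun r : ℝ => Real.exp (-(1/2 : ℝ) * r ^ 2)) := by
  continuity

private lemma gauss_hasDerivAt (x : ℝ) :
    HasDerivAt (fun x : ℝ => ∫ r in (0:ℝ)..x, Real.exp (-(1/2 : ℝ) * r ^ 2))
      (Real.exp (-(1/2 : ℝ) * x ^ 2)) x := by
  refine intervalIntegral.integral_hasDerivAt_right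
    (gauss_cont.intervalIntegrable _ _) ?_ gauss_cont.continuousAt
  exact ⟨Set.univ, Filter.univ_mem, gauss_cont.aestronglyMeasurable.restrict⟩

private lemma sqrt_tendsto_atTop : Filter.Tendsto Real.sqrt Filter.atTop Filter.atTop := by
  rw [show Real.sqrt = fun x : ℝ => x ^ (1/2 : ℝ) from funext Real.sqrt_eq_rpow]
  exact tendsto_rpow_atTop (by norm_num)

/-- The `z = 0` case of the convolution of the Lévy first-passage density with the heat kernel. -/
theorem levy_heatKernel_convolution_zero (y t : ℝ) (hy : 0 < y) (ht : 0 < t) :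
    ∫ u in (0:ℝ)..t,
      (y * Real.exp (-(y ^ 2) / (2 * u)) / Real.sqrt (2 * π * u ^ 3)) *
        (1 / Real.sqrt (2 * π * (t - u))) =
      Real.exp (-(y ^ 2) / (2 * t)) / Real.sqrt (2 * π * t) := by
  have hπ : (0:ℝ) < π := Real.pi_pos
  set g : ℝ → ℝ := fun u =>
    (y * Real.exp (-(y ^ 2) / (2 * u)) / Real.sqrt (2 * π * u ^ 3)) *
      (1 / Real.sqrt (2 * π * (t - u))) with hg
  set C : ℝ := Real.exp (-(y ^ 2) / (2 * t)) / (π * Real.sqrt t) with hC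
  set s : ℝ → ℝ := fun u => y * Real.sqrt ((t - u) / (u * t)) with hs
  set G : ℝ → ℝ := fun x => ∫ r in (0:ℝ)..x, Real.exp (-(1/2 : ℝ) * r ^ 2) with hG
  set F : ℝ → ℝ := fun u => -C * G (s u) with hF
  -- derivative of F on (0, t)
  have hderiv : ∀ u ∈ Set.Ioo (0:ℝ) t, HasDerivAt F (g u) u := by
    intro u hu
    obtain ⟨hu0, hut⟩ := hu
    have htu : 0 < t - u := sub_pos.2 hut
    have hq_pos : 0 < (t - u) / (u * t) := div_pos htu (mul_pos hu0 ht)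
    -- derivative of the inner rational function
    have hq : HasDerivAt (fun u : ℝ => (t - u) / (u * t)) (-(1 / u ^ 2)) u := by
      have h1 : HasDerivAt (fun u : ℝ => t - u) (-1) u := by
        simpa using (hasDerivAt_id u).const_sub t
      have h2 : HasDerivAt (fun u : ℝ => u * t) t u := by
        simpa using (hasDerivAt_id u).mul_const t
      have h3 := h1.div h2 (by positivity)
      refine HasDerivAt.congr_deriv h3 ?_
      field_simp
      ring
    -- derivative of s
    have hsd : HasDerivAt s (y * (1 / (2 * Real.sqrt ((t - u) / (u * t))) * -(1 / u ^ 2))) u := by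
      have := (Real.hasDerivAt_sqrt (ne_of_gt hq_pos)).comp u hq
      simpa [hs, mul_comm] using this.const_mul y
    -- derivative of F via chain rule
    have hFd : HasDerivAt F
        (-C * (Real.exp (-(1/2 : ℝ) * (s u) ^ 2) *
          (y * (1 / (2 * Real.sqrt ((t - u) / (u * t))) * -(1 / u ^ 2))))) u := by
      exact ((gauss_hasDerivAt (s u)).comp u hsd).const_mul (-C)
    convert hFd using 1
    -- algebraic identity
    have hsq : (s u) ^ 2 = y ^ 2 * ((t - u) / (u * t)) := by
      rw [hs]
      rw [mul_pow, Real.sq_sqrt hq_pos.le]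
    have hexp : Real.exp (-(1/2 : ℝ) * (s u) ^ 2) =
        Real.exp (-(y ^ 2) / (2 * u)) / Real.exp (-(y ^ 2) / (2 * t)) := by
      rw [← Real.exp_sub]
      congr 1
      rw [hsq]
      field_simp
      ring
    have h2π : (0:ℝ) < 2 * π := by positivity
    have hsu3 : Real.sqrt (2 * π * u ^ 3) = Real.sqrt (2 * π) * (u * Real.sqrt u) := by
      rw [Real.sqrt_mul h2π.le, show u ^ 3 = u ^ 2 * u by ring,
        Real.sqrt_mul (sq_nonneg u), Real.sqrt_sq hu0.le]
    have hstu : Real.sqrt (2 * π * (t - u)) = Real.sqrt (2 * π) * Real.sqrt (t - u) := by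
      rw [Real.sqrt_mul h2π.le]
    have hqsqrt : Real.sqrt ((t - u) / (u * t)) =
        Real.sqrt (t - u) / (Real.sqrt u * Real.sqrt t) := by
      rw [Real.sqrt_div htu.le, Real.sqrt_mul hu0.le]
    show g u = _
    rw [hg]
    beta_reduce
    rw [hexp, hsu3, hstu, hqsqrt]
    have e1 : (0:ℝ) < Real.exp (-(y ^ 2) / (2 * u)) := Real.exp_pos _
    have e2 : (0:ℝ) < Real.exp (-(y ^ 2) / (2 * t)) := Real.exp_pos _
    have sa : (0:ℝ) < Real.sqrt u := Real.sqrt_pos.2 hu0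
    have sb : (0:ℝ) < Real.sqrt (t - u) := Real.sqrt_pos.2 htu
    have sc : (0:ℝ) < Real.sqrt t := Real.sqrt_pos.2 ht
    have sd : (0:ℝ) < Real.sqrt (2 * π) := Real.sqrt_pos.2 h2π
    have hd2 : Real.sqrt (2 * π) ^ 2 = 2 * π := Real.sq_sqrt h2π.le
    have hu2 : Real.sqrt u ^ 2 = u := Real.sq_sqrt hu0.le
    field_simp
    ring_nf
    rw [Real.sq_sqrt (by positivity : (0:ℝ) ≤ π * 2), hu2, hC]
    field_simp
  -- interval integrability of g on [0, t]
  have hint : IntervalIntegrable g volume 0 t := by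
    set K : ℝ := 48 * t * Real.sqrt t / y ^ 5 with hK
    have hK0 : 0 ≤ K := by positivity
    have hbound : IntervalIntegrable (fun u : ℝ => K * (t - u) ^ (-(1/2) : ℝ)) volume 0 t := by
      have h1 : IntervalIntegrable (fun x : ℝ => x ^ (-(1/2) : ℝ)) volume 0 t :=
        intervalIntegral.intervalIntegrable_rpow' (by norm_num)
      have h2 := h1.comp_sub_left t
      have h3 : IntervalIntegrable (fun x : ℝ => (t - x) ^ (-(1/2) : ℝ)) volume 0 t := by
        simpa using h2.symm
      exact h3.const_mul K
    refine hbound.mono_fun' ?_ ?_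
    · apply Measurable.aestronglyMeasurable
      rw [hg]
      fun_prop
    · rw [Filter.EventuallyLE, MeasureTheory.ae_restrict_iff' measurableSet_uIoc]
      refine MeasureTheory.ae_of_all _ fun u hu => ?_
      rw [Set.uIoc_of_le ht.le] at hu
      obtain ⟨hu0, hut⟩ := hu
      rcases eq_or_lt_of_le hut with rfl | hult
      · rw [hg]
        beta_reduce
        rw [sub_self]
        simp [Real.zero_rpow (by norm_num : (-(1/2) : ℝ) ≠ 0)]
      · have htu : 0 < t - u := sub_pos.2 hult
        have hgnn : 0 ≤ g u := by rw [hg]; positivity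
        rw [Real.norm_eq_abs, abs_of_nonneg hgnn, hg]
        beta_reduce
        -- bound the first factor by K and the second by (t - u) ^ (-1/2)
        have hA : y * Real.exp (-(y ^ 2) / (2 * u)) / Real.sqrt (2 * π * u ^ 3) ≤ K := by
          have hx : 0 < y ^ 2 / (2 * u) := by positivity
          have hexple : Real.exp (-(y ^ 2) / (2 * u)) ≤ 48 * u ^ 3 / y ^ 6 := by
            have h6 : (y ^ 2 / (2 * u)) ^ 3 / 6 ≤ Real.exp (y ^ 2 / (2 * u)) := by
              have h := Real.pow_div_factorial_le_exp (x := y ^ 2 / (2 * u)) hx.le 3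
              norm_num [Nat.factorial] at h
              convert h using 2
            rw [show -(y ^ 2) / (2 * u) = -(y ^ 2 / (2 * u)) by ring, Real.exp_neg]
            rw [inv_le_comm₀ (Real.exp_pos _) (by positivity)]
            calc (48 * u ^ 3 / y ^ 6)⁻¹ = (y ^ 2 / (2 * u)) ^ 3 / 6 := by
                  field_simp; ring
              _ ≤ Real.exp (y ^ 2 / (2 * u)) := h6
          have hsqrtle : u * Real.sqrt u ≤ Real.sqrt (2 * π * u ^ 3) := by
            rw [show u * Real.sqrt u = Real.sqrt (u ^ 2) * Real.sqrt u by
              rw [Real.sqrt_sq hu0.le], ← Real.sqrt_mul (sq_nonneg u)]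
            apply Real.sqrt_le_sqrt
            nlinarith [Real.pi_gt_three, pow_pos hu0 3]
          have husp : 0 < u * Real.sqrt u := by positivity
          calc y * Real.exp (-(y ^ 2) / (2 * u)) / Real.sqrt (2 * π * u ^ 3)
              ≤ y * (48 * u ^ 3 / y ^ 6) / (u * Real.sqrt u) := by
                apply div_le_div₀ (by positivity) _ husp hsqrtle
                exact mul_le_mul_of_nonneg_left hexple hy.le
            _ ≤ K := by
                rw [hK]
                rw [div_le_div_iff₀ husp (by positivity)]
                have h1 : Real.sqrt u ≤ Real.sqrt t := Real.sqrt_le_sqrt hut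
                have h2 : Real.sqrt u ^ 2 = u := Real.sq_sqrt hu0.le
                have h3 : Real.sqrt t ^ 2 = t := Real.sq_sqrt ht.le
                have h4 : 0 < Real.sqrt u := Real.sqrt_pos.2 hu0
                have hyy : y * (48 * u ^ 3 / y ^ 6) * y ^ 5 = 48 * u ^ 3 := by
                  field_simp
                rw [hyy]
                have h5 : Real.sqrt u ^ 3 ≤ Real.sqrt t ^ 3 :=
                  pow_le_pow_left₀ h4.le h1 3
                have key : Real.sqrt u ^ 3 * Real.sqrt u ^ 3 ≤
                    Real.sqrt t ^ 3 * Real.sqrt u ^ 3 :=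
                  mul_le_mul_of_nonneg_right h5 (by positivity)
                have h2' : u ^ 3 = Real.sqrt u ^ 3 * Real.sqrt u ^ 3 := by
                  linear_combination (-(u ^ 2 + u * Real.sqrt u ^ 2 + Real.sqrt u ^ 4)) * h2
                have h3' : t * Real.sqrt t * (u * Real.sqrt u) =
                    Real.sqrt t ^ 3 * Real.sqrt u ^ 3 := by
                  linear_combination (-(u * Real.sqrt u * Real.sqrt t)) * h3 +
                    (-(Real.sqrt t ^ 3 * Real.sqrt u)) * h2
                nlinarith [key, h2', h3']
        have hB : 1 / Real.sqrt (2 * π * (t - u)) ≤ (t - u) ^ (-(1/2) : ℝ) := by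
          rw [Real.rpow_neg htu.le, ← Real.sqrt_eq_rpow, ← one_div]
          apply div_le_div_of_nonneg_left one_pos.le (Real.sqrt_pos.2 htu)
          apply Real.sqrt_le_sqrt
          nlinarith [Real.pi_gt_three, htu]
        have hAnn : 0 ≤ y * Real.exp (-(y ^ 2) / (2 * u)) / Real.sqrt (2 * π * u ^ 3) := by
          positivity
        have hBnn : 0 ≤ 1 / Real.sqrt (2 * π * (t - u)) := by positivity
        exact mul_le_mul hA hB hBnn hK0
  -- limit of F at 0⁺
  have hlim0 : Filter.Tendsto F (nhdsWithin 0 (Set.Ioi 0)) (nhds (-C * (Real.sqrt (2 * π) / 2))) := by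
    have hs_top : Filter.Tendsto s (nhdsWithin 0 (Set.Ioi 0)) Filter.atTop := by
      rw [hs]
      apply Filter.Tendsto.const_mul_atTop hy
      apply sqrt_tendsto_atTop.comp
      have h1 : Filter.Tendsto (fun u : ℝ => t - u) (nhdsWithin 0 (Set.Ioi 0)) (nhds t) := by
        have : Filter.Tendsto (fun u : ℝ => t - u) (nhds 0) (nhds (t - 0)) :=
          (continuous_const.sub continuous_id).tendsto 0
        simpa using this.mono_left nhdsWithin_le_nhds
      have h2 : Filter.Tendsto (fun u : ℝ => (u * t)⁻¹) (nhdsWithin 0 (Set.Ioi 0))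
          Filter.atTop := by
        apply tendsto_inv_nhdsGT_zero.comp
        rw [tendsto_nhdsWithin_iff]
        constructor
        · have : Filter.Tendsto (fun u : ℝ => u * t) (nhds 0) (nhds (0 * t)) :=
            (continuous_id.mul continuous_const).tendsto 0
          simpa using this.mono_left nhdsWithin_le_nhds
        · filter_upwards [self_mem_nhdsWithin] with u hu
          exact mul_pos hu ht
      have := h1.pos_mul_atTop ht h2
      simpa [div_eq_mul_inv] using this
    have hGi : MeasureTheory.IntegrableOn (fun r : ℝ => Real.exp (-(1/2 : ℝ) * r ^ 2))
        (Set.Ioi 0) := (integrable_exp_neg_mul_sq (by norm_num : (0:ℝ) < 1/2)).integrableOn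
    have hGt : Filter.Tendsto G Filter.atTop (nhds (Real.sqrt (2 * π) / 2)) := by
      have h := MeasureTheory.intervalIntegral_tendsto_integral_Ioi 0 hGi Filter.tendsto_id
      have hval : ∫ r in Set.Ioi (0:ℝ), Real.exp (-(1/2 : ℝ) * r ^ 2) =
          Real.sqrt (2 * π) / 2 := by
        rw [integral_gaussian_Ioi (1/2), show π / (1/2) = 2 * π by ring]
      rw [hval] at h
      exact h
    exact (hGt.comp hs_top).const_mul (-C)
  -- limit of F at t⁻
  have hlimt : Filter.Tendsto F (nhdsWithin t (Set.Iio t)) (nhds 0) := by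
    have hst : ContinuousAt s t := by
      rw [hs]
      apply continuousAt_const.mul
      apply Real.continuous_sqrt.continuousAt.comp
      exact (continuousAt_const.sub continuousAt_id).div
        (continuousAt_id.mul continuousAt_const) (by positivity)
    have hFc : ContinuousAt F t :=
      continuousAt_const.mul ((gauss_hasDerivAt (s t)).continuousAt.comp hst)
    have hFt : F t = 0 := by
      have hst0 : s t = 0 := by
        rw [hs]; simp
      rw [hF]
      beta_reduce
      rw [hst0, hG]
      simp
    have h := hFc.continuousWithinAt (s := Set.Iio t)
    rw [ContinuousWithinAt] at h
    rw [hFt] at h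
    exact h
  have := intervalIntegral.integral_eq_sub_of_hasDerivAt_of_tendsto ht hderiv hint hlim0 hlimt
  rw [hg] at this
  rw [this]
  -- final arithmetic
  have h2π : (0:ℝ) < 2 * π := by positivity
  have hd2 : Real.sqrt (2 * π) ^ 2 = 2 * π := Real.sq_sqrt h2π.le
  have sc : (0:ℝ) < Real.sqrt t := Real.sqrt_pos.2 ht
  have sd : (0:ℝ) < Real.sqrt (2 * π) := Real.sqrt_pos.2 h2π
  rw [hC, Real.sqrt_mul h2π.le]
  field_simp
  ring_nf
  rw [Real.sq_sqrt (by positivity : (0:ℝ) ≤ π * 2)]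
  ring
end

section
/- Let S be a random walk on ℤ with i.i.d. increments, τ_a := min{n ≥ 1 : S_n = a}, Λᵃ_n := #{1 ≤ k ≤ n : S_k = a}, and let Ω_u denote the sum of u i.i.d. copies of τ_0. Then for a = 0 and x ∈ ℤ with x ≠ 0, for every ℓ ≥ 1 and n ∈ ℕ: ℙ[S_n = x, Λ⁰_n = ℓ] = Σ_{m=1}^{n} ℙ[Ω_ℓ = m]·ℙ[τ_x = n − m]. -/
open MeasureTheory ProbabilityTheory

/-- The random walk `S_n = X_1 + ⋯ + X_n`. -/
def S {Ω : Type*} (X : ℕ → Ω → ℤ) (n : ℕ) (ω : Ω) : ℤ :=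
  ∑ i ∈ Finset.range n, X (i + 1) ω

/-- The first hitting time `τ_a := min {n ≥ 1 : S_n = a}` (with value `⊤` if the walk
never hits `a`). -/
noncomputable def tau {Ω : Type*} (X : ℕ → Ω → ℤ) (a : ℤ) (ω : Ω) : ℕ∞ :=
  sInf {n : ℕ∞ | ∃ m : ℕ, n = m ∧ 1 ≤ m ∧ S X m ω = a}

/-- The occupation measure `Λᵃ_n := #{1 ≤ k ≤ n : S_k = a}`. -/
def occ {Ω : Type*} (X : ℕ → Ω → ℤ) (a : ℤ) (n : ℕ) (ω : Ω) : ℕ :=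
  ((Finset.Icc 1 n).filter fun k => S X k ω = a).card

/-- `Ω_u := ω_1 + ⋯ + ω_u`, the partial sums of i.i.d. copies of `τ_0`. -/
def Om {Ω : Type*} (w : ℕ → Ω → ℕ∞) (u : ℕ) (ω : Ω) : ℕ∞ :=
  ∑ i ∈ Finset.range u, w (i + 1) ω

noncomputable section AuxComb

/-- Weight of a list. -/
def Wt {α : Type*} (p : α → ENNReal) (l : List α) : ENNReal := (l.map p).prod

/-- Partial sum of a list of integers. -/
def ps (l : List ℤ) (k : ℕ) : ℤ := (l.take k).sum

lemma Wt_append {α : Type*} (p : α → ENNReal) (a b : List α) :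
    Wt p (a ++ b) = Wt p a * Wt p b := by simp [Wt]

lemma Wt_cons {α : Type*} (p : α → ENNReal) (a : α) (l : List α) :
    Wt p (a :: l) = p a * Wt p l := by simp [Wt]

lemma Wt_reverse {α : Type*} (p : α → ENNReal) (l : List α) :
    Wt p l.reverse = Wt p l := by
  simp [Wt, List.map_reverse, List.prod_reverse]

lemma ps_zero (l : List ℤ) : ps l 0 = 0 := by simp [ps]

lemma ps_append_left (a b : List ℤ) {k : ℕ} (hk : k ≤ a.length) :
    ps (a ++ b) k = ps a k := by
  simp [ps, List.take_append_of_le_length hk]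

lemma ps_append_right (a b : List ℤ) (j : ℕ) :
    ps (a ++ b) (a.length + j) = a.sum + ps b j := by
  simp [ps, List.take_append, List.take_of_length_le (Nat.le_add_right _ _)]

lemma ps_drop (l : List ℤ) (m j : ℕ) :
    ps (l.drop m) j = ps l (m + j) - ps l m := by
  have h : l.take (m + j) = l.take m ++ (l.drop m).take j := List.take_add
  simp [ps, h]

lemma ps_take (l : List ℤ) (m k : ℕ) (hk : k ≤ m) :
    ps (l.take m) k = ps l k := by
  simp [ps, List.take_take, Nat.min_eq_left hk]

lemma ps_length (l : List ℤ) : ps l l.length = l.sum := by simp [ps]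

/-- tsum over a set which is a finite disjoint union. -/
lemma tsum_set_partition {β : Type*} [Countable β] (w : β → ENNReal) (C : Set β)
    (s : Finset ℕ) (P : ℕ → Set β)
    (h : ∀ l, l ∈ C ↔ ∃ m ∈ s, l ∈ P m)
    (hdis : ∀ l, ∀ m ∈ s, ∀ m' ∈ s, l ∈ P m → l ∈ P m' → m = m') :
    ∑' l : C, w l = ∑ m ∈ s, ∑' l : P m, w l := by
  rw [tsum_subtype]
  have : ∀ m ∈ s, ∑' l : P m, w l = ∑' l : β, (P m).indicator w l := fun m _ => tsum_subtype _ _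
  rw [Finset.sum_congr rfl this, ← Summable.tsum_finsetSum (fun i _ => ENNReal.summable)]
  congr 1
  funext l
  by_cases hl : l ∈ C
  · obtain ⟨m₀, hm₀s, hm₀⟩ := (h l).1 hl
    rw [Finset.sum_eq_single m₀]
    · simp [Set.indicator_of_mem hm₀, Set.indicator_of_mem hl]
    · intro m hm hne
      have : l ∉ P m := fun hmem => hne (hdis l m hm m₀ hm₀s hmem hm₀)
      simp [Set.indicator_of_notMem this]
    · intro hm; exact absurd hm₀s hm
  · rw [Set.indicator_of_notMem hl]
    refine (Finset.sum_eq_zero fun m hm => ?_).symm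
    have : l ∉ P m := fun hmem => hl ((h l).2 ⟨m, hm, hmem⟩)
    simp [Set.indicator_of_notMem this]

/-- tsum over a set of appended lists factorizes. -/
lemma tsum_set_append {α : Type*} [Countable α] (p : α → ENNReal)
    (A B C : Set (List α)) (m : ℕ)
    (hA : ∀ a ∈ A, a.length = m)
    (hC : ∀ l, l ∈ C ↔ ∃ a ∈ A, ∃ b ∈ B, l = a ++ b) :
    ∑' l : C, Wt p l = (∑' a : A, Wt p a) * (∑' b : B, Wt p b) := by
  have hbij : Function.Bijective (fun ab : A × B =>
      (⟨ab.1.1 ++ ab.2.1, (hC _).2 ⟨ab.1.1, ab.1.2, ab.2.1, ab.2.2, rfl⟩⟩ : C)) := by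
    constructor
    · rintro ⟨⟨a, ha⟩, ⟨b, hb⟩⟩ ⟨⟨a', ha'⟩, ⟨b', hb'⟩⟩ hEq
      have h1 : a ++ b = a' ++ b' := congrArg Subtype.val hEq
      have hlen : a.length = a'.length := by rw [hA a ha, hA a' ha']
      obtain ⟨h2, h3⟩ := List.append_inj h1 hlen
      simp only [Prod.mk.injEq, Subtype.mk.injEq]
      exact ⟨h2, h3⟩
    · rintro ⟨l, hl⟩
      obtain ⟨a, ha, b, hb, rfl⟩ := (hC l).1 hl
      exact ⟨⟨⟨a, ha⟩, ⟨b, hb⟩⟩, rfl⟩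
  rw [← Equiv.tsum_eq (Equiv.ofBijective _ hbij) (fun l : C => Wt p l)]
  simp only [Equiv.ofBijective_apply]
  calc ∑' ab : A × B, Wt p (ab.1.1 ++ ab.2.1)
      = ∑' ab : A × B, Wt p ab.1.1 * Wt p ab.2.1 := by
        congr 1; funext ab; exact Wt_append p _ _
    _ = ∑' (a : A) (b : B), Wt p a.1 * Wt p b.1 := ENNReal.tsum_prod (f := fun (a : A) (b : B) => Wt p a.1 * Wt p b.1)
    _ = (∑' a : A, Wt p a) * (∑' b : B, Wt p b) := by
        rw [← ENNReal.tsum_mul_right]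
        congr 1; funext a; exact ENNReal.tsum_mul_left

end AuxComb

noncomputable section AuxSets

/-- First hitting of `x` at time exactly `u`. -/
def hitSet (x : ℤ) (u : ℕ) : Set (List ℤ) :=
  {l | l.length = u ∧ 1 ≤ u ∧ ps l u = x ∧ ∀ k, 1 ≤ k → k < u → ps l k ≠ x}

/-- Walk ends at `x` at time `u` avoiding `0` throughout `[1,u]`. -/
def avoidSet (x : ℤ) (u : ℕ) : Set (List ℤ) :=
  {l | l.length = u ∧ ps l u = x ∧ ∀ k, 1 ≤ k → k ≤ u → ps l k ≠ 0}

/-- Number of visits to `0` during `[1,m]`. -/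
def zc (l : List ℤ) (m : ℕ) : ℕ :=
  ((Finset.Icc 1 m).filter fun k => ps l k = 0).card

/-- Paths of length `m` ending at `0` with exactly `ℓ` visits to `0`. -/
def DSet (ℓ m : ℕ) : Set (List ℤ) :=
  {l | l.length = m ∧ ps l m = 0 ∧ zc l m = ℓ}

/-- Paths of length `n` ending at `x` with exactly `ℓ` visits to `0`. -/
def JSet (x : ℤ) (ℓ n : ℕ) : Set (List ℤ) :=
  {l | l.length = n ∧ ps l n = x ∧ zc l n = ℓ}

lemma zc_congr {l l' : List ℤ} {m : ℕ} (h : ∀ k, 1 ≤ k → k ≤ m → ps l k = ps l' k) :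
    zc l m = zc l' m := by
  unfold zc
  congr 1
  apply Finset.filter_congr
  intro k hk
  rw [Finset.mem_Icc] at hk
  rw [h k hk.1 hk.2]

lemma zc_take (l : List ℤ) (m : ℕ) : zc (l.take m) m = zc l m :=
  zc_congr fun k _ hk => ps_take l m k hk

lemma zc_split (l : List ℤ) {j m : ℕ} (hj : j ≤ m) (h0 : ps l j = 0) :
    zc l m = zc l j + zc (l.drop j) (m - j) := by
  unfold zc
  have hIcc : Finset.Icc 1 m = Finset.Icc 1 j ∪ Finset.Ioc j m := by
    ext k; simp only [Finset.mem_Icc, Finset.mem_union, Finset.mem_Ioc]; omega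
  rw [hIcc, Finset.filter_union, Finset.card_union_of_disjoint]
  · congr 1
    apply Finset.card_nbij (fun k => k - j)
    · intro k hk
      simp only [Finset.coe_filter, Set.mem_setOf_eq, Finset.mem_coe, Finset.mem_filter, Finset.mem_Ioc, Finset.mem_Icc] at hk ⊢
      refine ⟨⟨by omega, by omega⟩, ?_⟩
      rw [ps_drop]
      have : j + (k - j) = k := by omega
      rw [this, hk.2, h0, sub_zero]
    · intro k hk k' hk' hkk'
      simp only [Finset.coe_filter, Set.mem_setOf_eq, Finset.mem_Ioc] at hk hk'
      obtain ⟨⟨hk1, hk2⟩, -⟩ := hk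
      obtain ⟨⟨hk1', hk2'⟩, -⟩ := hk'
      have h2 : k - j = k' - j := hkk'
      omega
    · intro i hi
      simp only [Finset.coe_filter, Set.mem_setOf_eq, Finset.mem_Icc, Finset.mem_Ioc,
        Set.mem_image] at hi ⊢
      refine ⟨j + i, ⟨⟨by omega, by omega⟩, ?_⟩, by omega⟩
      have := ps_drop l j i
      rw [h0, sub_zero] at this
      rw [← this]
      exact hi.2
  · apply Finset.disjoint_filter_filter
    rw [Finset.disjoint_left]
    intro k hk hk'
    simp only [Finset.mem_Icc, Finset.mem_Ioc] at hk hk'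
    omega

lemma zc_pos_exists {l : List ℤ} {m ℓ : ℕ} (hℓ : 1 ≤ ℓ) (hz : zc l m = ℓ) :
    ∃ k, k ∈ (Finset.Icc 1 m).filter (fun k => ps l k = 0) := by
  have : ((Finset.Icc 1 m).filter fun k => ps l k = 0).Nonempty := by
    rw [← Finset.card_pos]
    show 0 < zc l m
    omega
  exact this

/-- `DSet 1 m = hitSet 0 m` for `m ≥ 1` (and `DSet 1 0 = ∅ = ` roughly `hitSet 0 0`). -/
lemma DSet_one (m : ℕ) : DSet 1 m = hitSet 0 m := by
  ext l
  simp only [DSet, hitSet, Set.mem_setOf_eq]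
  constructor
  · rintro ⟨hlen, hps, hzc⟩
    have hm : 1 ≤ m := by
      by_contra h
      have : m = 0 := by omega
      subst this
      simp [zc] at hzc
    refine ⟨hlen, hm, hps, fun k hk1 hkm hk0 => ?_⟩
    -- both k and m in the filter, card = 1, contradiction
    have hkmem : k ∈ (Finset.Icc 1 m).filter fun k => ps l k = 0 := by
      simp only [Finset.mem_filter, Finset.mem_Icc]
      exact ⟨⟨hk1, by omega⟩, hk0⟩
    have hmmem : m ∈ (Finset.Icc 1 m).filter fun k => ps l k = 0 := by
      simp only [Finset.mem_filter, Finset.mem_Icc]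
      exact ⟨⟨hm, le_rfl⟩, hps⟩
    have hsub : {k, m} ⊆ (Finset.Icc 1 m).filter fun k => ps l k = 0 := by
      intro i hi
      simp only [Finset.mem_insert, Finset.mem_singleton] at hi
      rcases hi with rfl | rfl
      · exact hkmem
      · exact hmmem
    have hcard : ({k, m} : Finset ℕ).card = 2 := by
      rw [Finset.card_insert_of_notMem (by simp; omega), Finset.card_singleton]
    have := Finset.card_le_card hsub
    rw [hcard] at this
    unfold zc at hzc
    omega
  · rintro ⟨hlen, hm, hps, hne⟩
    refine ⟨hlen, hps, ?_⟩
    have : (Finset.Icc 1 m).filter (fun k => ps l k = 0) = {m} := by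
      ext k
      simp only [Finset.mem_filter, Finset.mem_Icc, Finset.mem_singleton]
      constructor
      · rintro ⟨⟨h1, h2⟩, h3⟩
        by_contra h
        exact hne k h1 (by omega) h3
      · rintro rfl
        exact ⟨⟨hm, le_rfl⟩, hps⟩
    rw [zc, this, Finset.card_singleton]

end AuxSets

section Decomp

lemma ps_take_self (l : List ℤ) (m : ℕ) : ps (l.take m) m = ps l m :=
  ps_take l m m le_rfl

/-- Characterization of `JSet` by decomposition at the last zero. -/
lemma JSet_decomp (x : ℤ) (hx : x ≠ 0) (ℓ n : ℕ) (hℓ : 1 ≤ ℓ) (l : List ℤ) :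
    l ∈ JSet x ℓ n ↔ l.length = n ∧ ∃ m ∈ Finset.Icc 1 n,
      l.take m ∈ DSet ℓ m ∧ l.drop m ∈ avoidSet x (n - m) := by
  constructor
  · rintro ⟨hlen, hps, hzc⟩
    refine ⟨hlen, ?_⟩
    have hne : ((Finset.Icc 1 n).filter fun k => ps l k = 0).Nonempty := by
      rw [← Finset.card_pos]
      show 0 < zc l n
      omega
    set F := (Finset.Icc 1 n).filter fun k => ps l k = 0 with hF
    set m := F.max' hne with hm
    have hmmem : m ∈ F := Finset.max'_mem F hne
    have hmax : ∀ k ∈ F, k ≤ m := fun k hk => Finset.le_max' F k hk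
    simp only [hF, Finset.mem_filter, Finset.mem_Icc] at hmmem
    obtain ⟨⟨hm1, hmn⟩, hm0⟩ := hmmem
    have hnozero : ∀ i, 1 ≤ i → i ≤ n - m → ps (l.drop m) i ≠ 0 := by
      intro i hi1 hin hcon
      have hps' : ps l (m + i) = 0 := by
        have := ps_drop l m i
        rw [hcon, hm0] at this
        omega
      have : m + i ∈ F := by
        simp only [hF, Finset.mem_filter, Finset.mem_Icc]
        exact ⟨⟨by omega, by omega⟩, hps'⟩
      have := hmax _ this
      omega
    have hzcd : zc (l.drop m) (n - m) = 0 := by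
      rw [zc, Finset.card_eq_zero, Finset.filter_eq_empty_iff]
      intro k hk
      rw [Finset.mem_Icc] at hk
      exact hnozero k hk.1 hk.2
    have hsplit := zc_split l hmn hm0
    refine ⟨m, Finset.mem_Icc.2 ⟨hm1, hmn⟩, ⟨?_, ?_, ?_⟩, ⟨?_, ?_, ?_⟩⟩
    · simp [hlen, hmn]
    · rw [ps_take_self]; exact hm0
    · rw [zc_take]; omega
    · simp [hlen]
    · have := ps_drop l m (n - m)
      have h' : m + (n - m) = n := by omega
      rw [h', hps, hm0, sub_zero] at this
      exact this
    · exact hnozero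
  · rintro ⟨hlen, m, hmIcc, ⟨-, hD2, hD3⟩, ⟨-, hA2, hA3⟩⟩
    rw [Finset.mem_Icc] at hmIcc
    obtain ⟨hm1, hmn⟩ := hmIcc
    have hps_m : ps l m = 0 := by rw [← ps_take_self]; exact hD2
    have hzc_m : zc l m = ℓ := by rw [← zc_take]; exact hD3
    refine ⟨hlen, ?_, ?_⟩
    · have := ps_drop l m (n - m)
      have h' : m + (n - m) = n := by omega
      rw [h', hA2, hps_m, sub_zero] at this
      exact this.symm
    · rw [zc_split l hmn hps_m, hzc_m]
      have : zc (l.drop m) (n - m) = 0 := by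
        rw [zc, Finset.card_eq_zero, Finset.filter_eq_empty_iff]
        intro k hk
        rw [Finset.mem_Icc] at hk
        exact hA3 k hk.1 hk.2
      omega

/-- Uniqueness of the splitting point in `JSet_decomp`. -/
lemma JSet_uniq (x : ℤ) (ℓ n : ℕ) (l : List ℤ) (hlen : l.length = n)
    {m m' : ℕ} (hm : m ∈ Finset.Icc 1 n) (hm' : m' ∈ Finset.Icc 1 n)
    (h1 : l.take m ∈ DSet ℓ m ∧ l.drop m ∈ avoidSet x (n - m))
    (h2 : l.take m' ∈ DSet ℓ m' ∧ l.drop m' ∈ avoidSet x (n - m')) : m = m' := by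
  rw [Finset.mem_Icc] at hm hm'
  by_contra hne
  wlog hlt : m < m' generalizing m m'
  · exact this hm' hm h2 h1 (Ne.symm hne) (by omega)
  have hps' : ps l m' = 0 := by rw [← ps_take_self]; exact h2.1.2.1
  have := h1.2.2.2 (m' - m) (by omega) (by omega)
  rw [ps_drop] at this
  have hpsm : ps l m = 0 := by rw [← ps_take_self]; exact h1.1.2.1
  have h3 : m + (m' - m) = m' := by omega
  rw [h3, hps', hpsm, sub_zero] at this
  exact this rfl

/-- Characterization of `DSet (ℓ+1)` by decomposition at the first zero. -/
lemma DSet_decomp (ℓ m : ℕ) (l : List ℤ) :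
    l ∈ DSet (ℓ + 1) m ↔ l.length = m ∧ ∃ j ∈ Finset.Icc 1 m,
      l.take j ∈ hitSet 0 j ∧ l.drop j ∈ DSet ℓ (m - j) := by
  constructor
  · rintro ⟨hlen, hps, hzc⟩
    refine ⟨hlen, ?_⟩
    have hne : ((Finset.Icc 1 m).filter fun k => ps l k = 0).Nonempty := by
      rw [← Finset.card_pos]
      show 0 < zc l m
      omega
    set F := (Finset.Icc 1 m).filter fun k => ps l k = 0 with hF
    set j := F.min' hne with hj
    have hjmem : j ∈ F := Finset.min'_mem F hne
    have hmin : ∀ k ∈ F, j ≤ k := fun k hk => Finset.min'_le F k hk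
    simp only [hF, Finset.mem_filter, Finset.mem_Icc] at hjmem
    obtain ⟨⟨hj1, hjm⟩, hj0⟩ := hjmem
    have hnozero : ∀ k, 1 ≤ k → k < j → ps l k ≠ 0 := by
      intro k hk1 hkj hcon
      have : k ∈ F := by
        simp only [hF, Finset.mem_filter, Finset.mem_Icc]
        exact ⟨⟨hk1, by omega⟩, hcon⟩
      have := hmin _ this
      omega
    have hzcj : zc l j = 1 := by
      rw [zc]
      have : (Finset.Icc 1 j).filter (fun k => ps l k = 0) = {j} := by
        ext k
        simp only [Finset.mem_filter, Finset.mem_Icc, Finset.mem_singleton]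
        constructor
        · rintro ⟨⟨hk1, hk2⟩, hk3⟩
          by_contra h
          exact hnozero k hk1 (by omega) hk3
        · rintro rfl
          exact ⟨⟨hj1, le_rfl⟩, hj0⟩
      rw [this, Finset.card_singleton]
    have hsplit := zc_split l hjm hj0
    refine ⟨j, Finset.mem_Icc.2 ⟨hj1, hjm⟩, ⟨?_, hj1, ?_, ?_⟩, ⟨?_, ?_, ?_⟩⟩
    · simp [hlen, hjm]
    · rw [ps_take_self]; exact hj0
    · intro k hk1 hkj
      rw [ps_take l j k (by omega)]
      exact hnozero k hk1 hkj
    · simp [hlen]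
    · have := ps_drop l j (m - j)
      have h' : j + (m - j) = m := by omega
      rw [h', hps, hj0, sub_zero] at this
      exact this
    · omega
  · rintro ⟨hlen, j, hjIcc, ⟨-, hj1, hH2, hH3⟩, ⟨-, hD2, hD3⟩⟩
    rw [Finset.mem_Icc] at hjIcc
    obtain ⟨-, hjm⟩ := hjIcc
    have hps_j : ps l j = 0 := by rw [← ps_take_self]; exact hH2
    refine ⟨hlen, ?_, ?_⟩
    · have := ps_drop l j (m - j)
      have h' : j + (m - j) = m := by omega
      rw [h', hD2, hps_j, sub_zero] at this
      exact this.symm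
    · rw [zc_split l hjm hps_j, hD3]
      have hzcj : zc l j = 1 := by
        rw [zc]
        have : (Finset.Icc 1 j).filter (fun k => ps l k = 0) = {j} := by
          ext k
          simp only [Finset.mem_filter, Finset.mem_Icc, Finset.mem_singleton]
          constructor
          · rintro ⟨⟨hk1, hk2⟩, hk3⟩
            by_contra h
            have := hH3 k hk1 (by omega)
            rw [ps_take l j k hk2] at this
            exact this hk3
          · rintro rfl
            exact ⟨⟨hj1, le_rfl⟩, hps_j⟩
        rw [this, Finset.card_singleton]
      omega

/-- Uniqueness of the splitting point in `DSet_decomp`. -/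
lemma DSet_uniq (ℓ m : ℕ) (l : List ℤ) (hlen : l.length = m)
    {j j' : ℕ} (hj : j ∈ Finset.Icc 1 m) (hj' : j' ∈ Finset.Icc 1 m)
    (h1 : l.take j ∈ hitSet 0 j ∧ l.drop j ∈ DSet ℓ (m - j))
    (h2 : l.take j' ∈ hitSet 0 j' ∧ l.drop j' ∈ DSet ℓ (m - j')) : j = j' := by
  rw [Finset.mem_Icc] at hj hj'
  by_contra hne
  wlog hlt : j < j' generalizing j j'
  · exact this hj' hj h2 h1 (Ne.symm hne) (by omega)
  have hps_j : ps l j = 0 := by rw [← ps_take_self]; exact h1.1.2.2.1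
  have := h2.1.2.2.2 j (by omega) hlt
  rw [ps_take l j' j (by omega)] at this
  exact this hps_j

end Decomp

section Reversal

lemma sum_drop (l : List ℤ) (m : ℕ) : (l.drop m).sum = l.sum - ps l m := by
  have h : l = l.take m ++ l.drop m := (List.take_append_drop m l).symm
  conv_lhs => rw [show (l.drop m).sum = (l.take m ++ l.drop m).sum - (l.take m).sum by
    rw [List.sum_append]; ring]
  rw [← h, ps]

lemma ps_reverse (l : List ℤ) (k : ℕ) :
    ps l.reverse k = l.sum - ps l (l.length - k) := by
  rw [ps, List.take_reverse, List.sum_reverse, sum_drop]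

lemma mem_avoidSet_iff_reverse_mem_hitSet {x : ℤ} (hx : x ≠ 0) (u : ℕ) (l : List ℤ) :
    l ∈ avoidSet x u ↔ l.reverse ∈ hitSet x u := by
  constructor
  · rintro ⟨hlen, hps, havd⟩
    have hsum : l.sum = x := by rw [← ps_length, hlen]; exact hps
    have hu : 1 ≤ u := by
      by_contra h
      have : u = 0 := by omega
      subst this
      rw [ps_zero] at hps
      exact hx hps.symm
    refine ⟨by simp [hlen], hu, ?_, ?_⟩
    · rw [ps_reverse, hlen]
      simp [hsum, ps_zero]
    · intro k hk1 hku hcon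
      rw [ps_reverse, hlen, hsum] at hcon
      have : ps l (u - k) = 0 := by omega
      exact havd (u - k) (by omega) (by omega) this
  · rintro ⟨hlen, hu, hps, hne⟩
    rw [List.length_reverse] at hlen
    have hsum : l.sum = x := by
      have := hps
      rw [ps_reverse, hlen, Nat.sub_self, ps_zero, sub_zero] at this
      exact this
    refine ⟨hlen, by rw [← hlen, ps_length]; exact hsum, ?_⟩
    intro k hk1 hku hcon
    rcases eq_or_lt_of_le hku with rfl | hklt
    · rw [← hlen, ps_length, hsum] at hcon
      exact hx hcon
    · have hval : ps l.reverse (u - k) = x - ps l k := by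
        rw [ps_reverse, hlen, hsum]
        have : u - (u - k) = k := by omega
        rw [this]
      have := hne (u - k) (by omega) (by omega)
      rw [hval, hcon, sub_zero] at this
      exact this rfl

lemma tsum_avoidSet_eq_tsum_hitSet (p : ℤ → ENNReal) {x : ℤ} (hx : x ≠ 0) (u : ℕ) :
    ∑' b : avoidSet x u, Wt p b.1 = ∑' v : hitSet x u, Wt p v.1 := by
  let e : avoidSet x u ≃ hitSet x u :=
    { toFun := fun l => ⟨l.1.reverse, (mem_avoidSet_iff_reverse_mem_hitSet hx u l.1).1 l.2⟩
      invFun := fun r => ⟨r.1.reverse, by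
        have := (mem_avoidSet_iff_reverse_mem_hitSet hx u r.1.reverse).2
        rw [List.reverse_reverse] at this
        exact this r.2⟩
      left_inv := fun l => by simp
      right_inv := fun r => by simp }
  rw [← Equiv.tsum_eq e (fun v : hitSet x u => Wt p v.1)]
  congr 1
  funext l
  show Wt p l.1 = Wt p l.1.reverse
  exact (Wt_reverse p l.1).symm

end Reversal

section Renewal

/-- Lists of `ℓ` extended naturals summing to `m`. -/
def BSet (ℓ m : ℕ) : Set (List ℕ∞) :=
  {t | t.length = ℓ ∧ t.sum = (m : ℕ∞)}

lemma mem_takedrop_iff {α : Type*} (A B : Set (List α)) {m n : ℕ} (hmn : m ≤ n)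
    (hA : ∀ a ∈ A, a.length = m) (hB : ∀ b ∈ B, b.length = n - m) (l : List α) :
    (l.length = n ∧ l.take m ∈ A ∧ l.drop m ∈ B) ↔ ∃ a ∈ A, ∃ b ∈ B, l = a ++ b := by
  constructor
  · rintro ⟨hlen, hta, htb⟩
    exact ⟨l.take m, hta, l.drop m, htb, (List.take_append_drop m l).symm⟩
  · rintro ⟨a, ha, b, hb, rfl⟩
    have hla := hA a ha
    have hlb := hB b hb
    refine ⟨by rw [List.length_append, hla, hlb]; omega, ?_, ?_⟩
    · rw [List.take_left' hla]; exact ha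
    · rw [List.drop_left' hla]; exact hb

variable (p : ℤ → ENNReal) (q : ℕ∞ → ENNReal)

/-- Recursion for the `DSet` weights by first-zero decomposition. -/
lemma DSet_rec (ℓ m : ℕ) :
    ∑' l : DSet (ℓ + 1) m, Wt p l.1 =
      ∑ j ∈ Finset.Icc 1 m, (∑' a : hitSet 0 j, Wt p a.1) * ∑' b : DSet ℓ (m - j), Wt p b.1 := by
  rw [tsum_set_partition (Wt p) (DSet (ℓ + 1) m) (Finset.Icc 1 m)
    (fun j => {l | l.length = m ∧ l.take j ∈ hitSet 0 j ∧ l.drop j ∈ DSet ℓ (m - j)})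
    (fun l => by
      rw [DSet_decomp]
      constructor
      · rintro ⟨hlen, j, hj, h1, h2⟩; exact ⟨j, hj, hlen, h1, h2⟩
      · rintro ⟨j, hj, hlen, h1, h2⟩; exact ⟨hlen, j, hj, h1, h2⟩)
    (fun l j hj j' hj' h h' => DSet_uniq ℓ m l h.1 hj hj' ⟨h.2.1, h.2.2⟩ ⟨h'.2.1, h'.2.2⟩)]
  refine Finset.sum_congr rfl fun j hj => ?_
  rw [Finset.mem_Icc] at hj
  exact tsum_set_append p (hitSet 0 j) (DSet ℓ (m - j)) _ j
    (fun a ha => ha.1)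
    (mem_takedrop_iff _ _ hj.2 (fun a ha => ha.1) (fun b hb => hb.1))

/-- Recursion for the `BSet` weights by splitting off the first entry. -/
lemma BSet_rec (ℓ m : ℕ) :
    ∑' t : BSet (ℓ + 1) m, Wt q t.1 =
      ∑ j ∈ Finset.range (m + 1), q j * ∑' t : BSet ℓ (m - j), Wt q t.1 := by
  have hmem : ∀ t : List ℕ∞, t ∈ BSet (ℓ + 1) m ↔ ∃ j ∈ Finset.range (m + 1),
      t ∈ {t : List ℕ∞ | t.length = ℓ + 1 ∧ t.take 1 ∈ ({[(j : ℕ∞)]} : Set (List ℕ∞)) ∧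
        t.drop 1 ∈ BSet ℓ (m - j)} := by
    intro t
    constructor
    · rintro ⟨hlen, hsum⟩
      obtain ⟨s, t', rfl⟩ : ∃ s t', t = s :: t' := by
        match t, hlen with
        | s :: t', _ => exact ⟨s, t', rfl⟩
      rw [List.sum_cons] at hsum
      have hsne : s ≠ ⊤ := by intro hs; rw [hs] at hsum; simp [top_add] at hsum
      lift s to ℕ using hsne with js
      have hrne : t'.sum ≠ ⊤ := by intro hr; rw [hr] at hsum; simp [add_top] at hsum
      set r := t'.sum with hr
      lift r to ℕ using hrne with ks
      have hjk : js + ks = m := by exact_mod_cast hsum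
      refine ⟨js, Finset.mem_range.2 (by omega), ?_, ?_, ?_⟩
      · simpa using hlen
      · simp
      · refine ⟨by simpa using hlen, ?_⟩
        simp only [List.drop_succ_cons, List.drop_zero]
        rw [← hr]
        congr 1
        omega
    · rintro ⟨j, hj, hlen, ht1, ht2⟩
      rw [Finset.mem_range] at hj
      obtain ⟨s, t', rfl⟩ : ∃ s t', t = s :: t' := by
        match t, hlen with
        | s :: t', _ => exact ⟨s, t', rfl⟩
      rw [Set.mem_singleton_iff] at ht1
      simp only [List.take_succ_cons, List.take_zero] at ht1
      have hs : s = (j : ℕ∞) := by injection ht1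
      obtain ⟨hlen', hsum'⟩ := ht2
      simp only [List.drop_succ_cons, List.drop_zero] at hsum' hlen'
      refine ⟨hlen, ?_⟩
      rw [List.sum_cons, hs, hsum', ← Nat.cast_add]
      congr 1
      omega
  have huniq : ∀ t : List ℕ∞, ∀ j ∈ Finset.range (m + 1), ∀ j' ∈ Finset.range (m + 1),
      t ∈ {t : List ℕ∞ | t.length = ℓ + 1 ∧ t.take 1 ∈ ({[(j : ℕ∞)]} : Set (List ℕ∞)) ∧
        t.drop 1 ∈ BSet ℓ (m - j)} →
      t ∈ {t : List ℕ∞ | t.length = ℓ + 1 ∧ t.take 1 ∈ ({[(j' : ℕ∞)]} : Set (List ℕ∞)) ∧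
        t.drop 1 ∈ BSet ℓ (m - j')} → j = j' := by
    intro t j _ j' _ h h'
    have h1 := h.2.1
    have h2 := h'.2.1
    rw [Set.mem_singleton_iff] at h1 h2
    rw [h1] at h2
    have : (j : ℕ∞) = (j' : ℕ∞) := by injection h2
    exact_mod_cast this
  rw [tsum_set_partition (Wt q) (BSet (ℓ + 1) m) (Finset.range (m + 1))
    (fun j => {t : List ℕ∞ | t.length = ℓ + 1 ∧ t.take 1 ∈ ({[(j : ℕ∞)]} : Set (List ℕ∞)) ∧
      t.drop 1 ∈ BSet ℓ (m - j)}) hmem huniq]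
  refine Finset.sum_congr rfl fun j hj => ?_
  have happ := tsum_set_append q ({[(j : ℕ∞)]} : Set (List ℕ∞)) (BSet ℓ (m - j)) _ 1
    (fun a ha => by rw [Set.mem_singleton_iff] at ha; rw [ha]; rfl)
    (mem_takedrop_iff ({[(j : ℕ∞)]} : Set (List ℕ∞)) (BSet ℓ (m - j))
      (by omega : 1 ≤ ℓ + 1)
      (fun a ha => by rw [Set.mem_singleton_iff] at ha; rw [ha]; rfl)
      (fun b hb => by rw [hb.1]; omega))
  refine happ.trans ?_
  congr 1
  rw [tsum_singleton ([(j : ℕ∞)]) (Wt q), Wt_cons, Wt, List.map_nil, List.prod_nil, mul_one]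

end Renewal

section RenewalMain

variable (p : ℤ → ENNReal) (q : ℕ∞ → ENNReal)

lemma BSet_one (m : ℕ) : BSet 1 m = ({[(m : ℕ∞)]} : Set (List ℕ∞)) := by
  ext t
  simp only [BSet, Set.mem_setOf_eq, Set.mem_singleton_iff]
  constructor
  · rintro ⟨hlen, hsum⟩
    obtain ⟨s, rfl⟩ : ∃ s, t = [s] := by
      match t, hlen with
      | [s], _ => exact ⟨s, rfl⟩
    rw [List.sum_cons, List.sum_nil, add_zero] at hsum
    rw [hsum]
  · rintro rfl
    exact ⟨rfl, by simp⟩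

lemma DSet_zero_empty (ℓ : ℕ) (hℓ : 1 ≤ ℓ) : DSet ℓ 0 = (∅ : Set (List ℤ)) := by
  ext l
  simp only [DSet, Set.mem_setOf_eq, Set.mem_empty_iff_false, iff_false, not_and]
  intro _ _
  rw [zc]
  simp
  omega

lemma renewal (hq0 : q 0 = 0)
    (hqk : ∀ k : ℕ, 1 ≤ k → q (k : ℕ∞) = ∑' v : hitSet 0 k, Wt p v.1) :
    ∀ ℓ, 1 ≤ ℓ → ∀ m, ∑' t : BSet ℓ m, Wt q t.1 = ∑' a : DSet ℓ m, Wt p a.1 := by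
  intro ℓ hℓ
  induction ℓ, hℓ using Nat.le_induction with
  | base =>
    intro m
    rw [BSet_one, tsum_singleton ([(m : ℕ∞)]) (Wt q), Wt_cons, Wt, List.map_nil,
      List.prod_nil, mul_one]
    rcases Nat.eq_zero_or_pos m with rfl | hm
    · rw [Nat.cast_zero, hq0, DSet_zero_empty 1 le_rfl]
      simp
    · rw [hqk m hm, DSet_one]
  | succ ℓ hℓ ih =>
    intro m
    rw [BSet_rec, DSet_rec]
    have hrange : Finset.range (m + 1) = insert 0 (Finset.Icc 1 m) := by
      ext k
      simp only [Finset.mem_range, Finset.mem_insert, Finset.mem_Icc]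
      omega
    rw [hrange, Finset.sum_insert (by simp)]
    rw [Nat.cast_zero, hq0, zero_mul, zero_add]
    refine Finset.sum_congr rfl fun j hj => ?_
    rw [Finset.mem_Icc] at hj
    rw [hqk j hj.1, ih (m - j)]

end RenewalMain

section CombMain

variable (p : ℤ → ENNReal) (q : ℕ∞ → ENNReal)

lemma JSet_split {x : ℤ} (hx : x ≠ 0) {ℓ : ℕ} (hℓ : 1 ≤ ℓ) (n : ℕ) :
    ∑' l : JSet x ℓ n, Wt p l.1 =
      ∑ m ∈ Finset.Icc 1 n,
        (∑' a : DSet ℓ m, Wt p a.1) * ∑' b : avoidSet x (n - m), Wt p b.1 := by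
  rw [tsum_set_partition (Wt p) (JSet x ℓ n) (Finset.Icc 1 n)
    (fun m => {l | l.length = n ∧ l.take m ∈ DSet ℓ m ∧ l.drop m ∈ avoidSet x (n - m)})
    (fun l => by
      rw [JSet_decomp x hx ℓ n hℓ]
      constructor
      · rintro ⟨hlen, m, hm, h1, h2⟩; exact ⟨m, hm, hlen, h1, h2⟩
      · rintro ⟨m, hm, hlen, h1, h2⟩; exact ⟨hlen, m, hm, h1, h2⟩)
    (fun l m hm m' hm' h h' => JSet_uniq x ℓ n l h.1 hm hm' ⟨h.2.1, h.2.2⟩ ⟨h'.2.1, h'.2.2⟩)]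
  refine Finset.sum_congr rfl fun m hm => ?_
  rw [Finset.mem_Icc] at hm
  exact tsum_set_append p (DSet ℓ m) (avoidSet x (n - m)) _ m
    (fun a ha => ha.1)
    (mem_takedrop_iff _ _ hm.2 (fun a ha => ha.1) (fun b hb => hb.1))

/-- The combinatorial master identity. -/
lemma comb_main (hq0 : q 0 = 0)
    (hqk : ∀ k : ℕ, 1 ≤ k → q (k : ℕ∞) = ∑' v : hitSet 0 k, Wt p v.1)
    {x : ℤ} (hx : x ≠ 0) {ℓ : ℕ} (hℓ : 1 ≤ ℓ) (n : ℕ) :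
    ∑' l : JSet x ℓ n, Wt p l.1 =
      ∑ m ∈ Finset.Icc 1 n,
        (∑' t : BSet ℓ m, Wt q t.1) * ∑' v : hitSet x (n - m), Wt p v.1 := by
  rw [JSet_split p hx hℓ n]
  refine Finset.sum_congr rfl fun m _ => ?_
  rw [renewal p q hq0 hqk ℓ hℓ m, tsum_avoidSet_eq_tsum_hitSet p hx (n - m)]

end CombMain


noncomputable section AuxBridge

lemma listprod_eq_prod_range (L : List ENNReal) :
    L.prod = ∏ i ∈ Finset.range L.length, L.getD i 1 := by
  induction L with
  | nil => simp
  | cons a t ih =>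
    rw [List.prod_cons, List.length_cons, Finset.prod_range_succ', ih]
    simp [mul_comm]

section Bridge

variable {Ωs α : Type*} [MeasureSpace Ωs] [IsProbabilityMeasure (ℙ : Measure Ωs)]
  [Countable α] [MeasurableSpace α] [MeasurableSingletonClass α]

/-- The path of the first `n` steps. -/
def pathOf (Y : ℕ → Ωs → α) (n : ℕ) (ω : Ωs) : List α :=
  (List.range n).map fun i => Y (i + 1) ω

lemma pathOf_length (Y : ℕ → Ωs → α) (n : ℕ) (ω : Ωs) : (pathOf Y n ω).length = n := by
  simp [pathOf]

lemma pathOf_eq_iff (Y : ℕ → Ωs → α) (n : ℕ) (ω : Ωs) (l : List α) (hl : l.length = n) :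
    pathOf Y n ω = l ↔ ∀ i ∈ Finset.Ioc 0 n, Y i ω ∈ {z : α | l[i-1]? = some z} := by
  constructor
  · rintro rfl i hi
    rw [Finset.mem_Ioc] at hi
    have h1 : i - 1 < n := by omega
    show ((List.range n).map fun j => Y (j + 1) ω)[i-1]? = some (Y i ω)
    rw [List.getElem?_map, List.getElem?_range h1, Option.map_some]
    have h2 : i - 1 + 1 = i := by omega
    rw [h2]
  · intro h
    apply List.ext_getElem?
    intro i
    rcases lt_or_ge i n with hin | hin
    · have hh := h (i + 1) (Finset.mem_Ioc.2 ⟨by omega, by omega⟩)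
      simp only [Set.mem_setOf_eq, Nat.add_sub_cancel] at hh
      show ((List.range n).map fun j => Y (j + 1) ω)[i]? = l[i]?
      rw [List.getElem?_map, List.getElem?_range hin, Option.map_some, hh]
    · rw [List.getElem?_eq_none (by simp [pathOf]; omega), List.getElem?_eq_none (by omega)]

lemma bridge (Y : ℕ → Ωs → α) (hm : ∀ i, AEMeasurable (Y i) ℙ)
    (hindep : iIndepFun Y ℙ)
    (hident : ∀ i, IdentDistrib (Y i) (Y 1) ℙ ℙ)
    (n : ℕ) (A : Set (List α)) (hA : ∀ l ∈ A, l.length = n) :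
    ℙ {ω | pathOf Y n ω ∈ A} = ∑' l : A, Wt (fun z => ℙ (Y 1 ⁻¹' {z})) l.1 := by
  have hsets_meas : ∀ (l : List α) (i : ℕ), MeasurableSet {z : α | l[i-1]? = some z} := by
    intro l i
    rcases h : l[i-1]? with _ | z
    · convert MeasurableSet.empty
      ext z; simp
    · convert measurableSet_singleton z using 1
      ext y; simp [eq_comm]
  have hsingle : ∀ l ∈ A, ℙ {ω | pathOf Y n ω = l} = Wt (fun z => ℙ (Y 1 ⁻¹' {z})) l := by
    intro l hl
    have hlen := hA l hl
    have hev : {ω | pathOf Y n ω = l} =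
        ⋂ i ∈ Finset.Ioc 0 n, Y i ⁻¹' {z : α | l[i-1]? = some z} := by
      ext ω
      simp only [Set.mem_setOf_eq, Set.mem_iInter, Set.mem_preimage]
      exact pathOf_eq_iff Y n ω l hlen
    rw [hev, hindep.measure_inter_preimage_eq_mul (Finset.Ioc 0 n)
      (fun i _ => hsets_meas l i)]
    have hIoc : Finset.Ioc 0 n = (Finset.range n).map ⟨Nat.succ, Nat.succ_injective⟩ := by
      ext j
      simp only [Finset.mem_Ioc, Finset.mem_map, Finset.mem_range, Function.Embedding.coeFn_mk]
      constructor
      · rintro ⟨h1, h2⟩; exact ⟨j - 1, by omega, by omega⟩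
      · rintro ⟨i, hi, rfl⟩; omega
    rw [hIoc, Finset.prod_map]
    simp only [Function.Embedding.coeFn_mk]
    have hterm : ∀ i ∈ Finset.range n,
        ℙ (Y (Nat.succ i) ⁻¹' {z : α | l[Nat.succ i - 1]? = some z}) =
          (l.map fun z => ℙ (Y 1 ⁻¹' {z})).getD i 1 := by
      intro i hi
      rw [Finset.mem_range] at hi
      have hi' : i < l.length := by omega
      have hset : {z : α | l[Nat.succ i - 1]? = some z} = {l[i]} := by
        ext z
        simp only [Nat.succ_sub_one, Set.mem_setOf_eq, Set.mem_singleton_iff,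
          List.getElem?_eq_getElem hi', Option.some.injEq, eq_comm]
      rw [hset, (hident (Nat.succ i)).measure_mem_eq (measurableSet_singleton _)]
      rw [List.getD_eq_getElem _ _ (by simp [hi'] : i < (l.map fun z => ℙ (Y 1 ⁻¹' {z})).length)]
      simp
    rw [Finset.prod_congr rfl hterm, Wt, listprod_eq_prod_range]
    congr 1
    simp [hlen]
  have hev_meas : ∀ l : List α, NullMeasurableSet {ω | pathOf Y n ω = l} ℙ := by
    intro l
    rcases eq_or_ne l.length n with hlen | hlen
    · have hev : {ω | pathOf Y n ω = l} =
          ⋂ i ∈ Finset.Ioc 0 n, Y i ⁻¹' {z : α | l[i-1]? = some z} := by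
        ext ω
        simp only [Set.mem_setOf_eq, Set.mem_iInter, Set.mem_preimage]
        exact pathOf_eq_iff Y n ω l hlen
      rw [hev]
      exact NullMeasurableSet.biInter (Finset.Ioc 0 n).countable_toSet
        fun i _ => (hm i).nullMeasurable (hsets_meas l i)
    · have : {ω | pathOf Y n ω = l} = ∅ := by
        ext ω
        simp only [Set.mem_setOf_eq, Set.mem_empty_iff_false, iff_false]
        intro h
        rw [← h] at hlen
        exact hlen (pathOf_length Y n ω)
      rw [this]
      exact MeasurableSet.empty.nullMeasurableSet
  have hunion : {ω | pathOf Y n ω ∈ A} = ⋃ l : A, {ω | pathOf Y n ω = l.1} := by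
    ext ω
    simp only [Set.mem_setOf_eq, Set.mem_iUnion]
    constructor
    · intro h; exact ⟨⟨_, h⟩, rfl⟩
    · rintro ⟨⟨l, hl⟩, h⟩; rw [h]; exact hl
  have hdisj : Pairwise (Function.onFun Disjoint fun l : A => {ω | pathOf Y n ω = l.1}) := by
    rintro ⟨l, hl⟩ ⟨l', hl'⟩ hne
    simp only [Function.onFun, Set.disjoint_left]
    intro ω h1 h2
    simp only [Set.mem_setOf_eq] at h1 h2
    exact hne (Subtype.ext (h1.symm.trans h2))
  rw [hunion, measure_iUnion₀ (fun a b hab => (hdisj hab).aedisjoint) (fun l => hev_meas l.1)]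
  exact tsum_congr fun l => hsingle l.1 l.2

end Bridge
end AuxBridge

noncomputable section Assembly

lemma sum_map_range {M : Type*} [AddCommMonoid M] (f : ℕ → M) (k : ℕ) :
    ((List.range k).map f).sum = ∑ i ∈ Finset.range k, f i := by
  induction k with
  | zero => simp
  | succ k ih =>
    rw [List.range_succ, List.map_append, List.sum_append, Finset.sum_range_succ, ih]
    simp

variable {Ω' : Type*} [MeasureSpace Ω'] [IsProbabilityMeasure (ℙ : Measure Ω')]

lemma ps_pathOf (X : ℕ → Ω' → ℤ) (n k : ℕ) (hk : k ≤ n) (ω : Ω') :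
    ps (pathOf X n ω) k = S X k ω := by
  rw [ps, pathOf, ← List.map_take, List.take_range, Nat.min_eq_left hk, sum_map_range]
  rfl

lemma sum_pathOf {α : Type*} [AddCommMonoid α] (Y : ℕ → Ω' → α) (n : ℕ) (ω : Ω') :
    (pathOf Y n ω).sum = ∑ i ∈ Finset.range n, Y (i + 1) ω := by
  rw [pathOf, sum_map_range]

/-- Characterization of the hitting time taking a finite value. -/
lemma tau_eq_coe_iff (X : ℕ → Ω' → ℤ) (a : ℤ) (ω : Ω') (u : ℕ) :
    tau X a ω = (u : ℕ∞) ↔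
      1 ≤ u ∧ S X u ω = a ∧ ∀ k, 1 ≤ k → k < u → S X k ω ≠ a := by
  set T := {n : ℕ∞ | ∃ m : ℕ, n = (m : ℕ∞) ∧ 1 ≤ m ∧ S X m ω = a} with hT
  constructor
  · intro h
    have hne : T.Nonempty := by
      by_contra hemp
      rw [Set.not_nonempty_iff_eq_empty] at hemp
      rw [tau, ← hT, hemp, sInf_empty] at h
      exact (ENat.coe_ne_top u) h.symm
    obtain ⟨b, hbT, hmin⟩ := wellFounded_lt.has_min T hne
    have hsInf : sInf T = b :=
      le_antisymm (sInf_le hbT) (le_sInf fun c hc => not_lt.1 (hmin c hc))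
    rw [tau, ← hT, hsInf] at h
    subst h
    obtain ⟨m, hm, hm1, hma⟩ := hbT
    have hmu : m = u := by exact_mod_cast hm.symm
    subst hmu
    refine ⟨hm1, hma, ?_⟩
    intro k hk1 hku hka
    have hkT : (k : ℕ∞) ∈ T := ⟨k, rfl, hk1, hka⟩
    exact hmin _ hkT (by exact_mod_cast hku)
  · rintro ⟨h1, h2, h3⟩
    have huT : (u : ℕ∞) ∈ T := ⟨u, rfl, h1, h2⟩
    refine le_antisymm (sInf_le huT) (le_sInf ?_)
    rintro t ⟨m, rfl, hm1, hma⟩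
    have : u ≤ m := by
      by_contra hlt
      exact h3 m hm1 (by omega) hma
    exact_mod_cast this

lemma tau_event_eq (X : ℕ → Ω' → ℤ) (a : ℤ) (u : ℕ) :
    {ω | tau X a ω = (u : ℕ∞)} = {ω | pathOf X u ω ∈ hitSet a u} := by
  ext ω
  rw [Set.mem_setOf_eq, Set.mem_setOf_eq, tau_eq_coe_iff]
  constructor
  · rintro ⟨h1, h2, h3⟩
    refine ⟨pathOf_length X u ω, h1, ?_, ?_⟩
    · rw [ps_pathOf X u u le_rfl]; exact h2
    · intro k hk1 hku
      rw [ps_pathOf X u k (by omega)]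
      exact h3 k hk1 hku
  · rintro ⟨-, h1, h2, h3⟩
    refine ⟨h1, ?_, ?_⟩
    · rw [← ps_pathOf X u u le_rfl]; exact h2
    · intro k hk1 hku
      rw [← ps_pathOf X u k (by omega)]
      exact h3 k hk1 hku

lemma joint_event_eq (X : ℕ → Ω' → ℤ) (x : ℤ) (n ℓ : ℕ) :
    {ω | S X n ω = x ∧ occ X 0 n ω = ℓ} = {ω | pathOf X n ω ∈ JSet x ℓ n} := by
  ext ω
  simp only [Set.mem_setOf_eq, JSet]
  have hocc : occ X 0 n ω = zc (pathOf X n ω) n := by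
    rw [occ, zc]
    congr 1
    apply Finset.filter_congr
    intro k hk
    rw [Finset.mem_Icc] at hk
    rw [ps_pathOf X n k hk.2]
  constructor
  · rintro ⟨h1, h2⟩
    exact ⟨pathOf_length X n ω, by rw [ps_pathOf X n n le_rfl]; exact h1, by rw [← hocc]; exact h2⟩
  · rintro ⟨-, h1, h2⟩
    exact ⟨by rw [← ps_pathOf X n n le_rfl]; exact h1, by rw [hocc]; exact h2⟩

lemma Om_event_eq (w : ℕ → Ω' → ℕ∞) (ℓ m : ℕ) :
    {ω | Om w ℓ ω = (m : ℕ∞)} = {ω | pathOf w ℓ ω ∈ BSet ℓ m} := by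
  ext ω
  simp only [Set.mem_setOf_eq, BSet, pathOf_length]
  rw [sum_pathOf, Om]
  simp

end Assembly

/-- Joint decomposition at the last visit to `0`, for `x ≠ 0`:
`ℙ[S_n = x, Λ⁰_n = ℓ] = Σ_{m=1}^n ℙ[Ω_ℓ = m] ℙ[τ_x = n − m]`. -/
theorem joint_occ_zero_eq_sum_Om_mul_tau {Ω : Type*} [MeasureSpace Ω]
    [IsProbabilityMeasure (ℙ : Measure Ω)] (X : ℕ → Ω → ℤ)
    (hmeas : ∀ i, Measurable (X i))
    (hindep : iIndepFun X ℙ)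
    (hident : ∀ i, IdentDistrib (X i) (X 1) ℙ ℙ)
    (w : ℕ → Ω → ℕ∞)
    (hw_indep : iIndepFun w ℙ)
    (hw_ident : ∀ i, IdentDistrib (w i) (tau X 0) ℙ ℙ)
    (x : ℤ) (hx : x ≠ 0) (n ℓ : ℕ) (hℓ : 1 ≤ ℓ) :
    ℙ {ω | S X n ω = x ∧ occ X 0 n ω = ℓ} =
      ∑ m ∈ Finset.Icc 1 n,
        ℙ {ω | Om w ℓ ω = (m : ℕ∞)} * ℙ {ω | tau X x ω = ((n - m : ℕ) : ℕ∞)} := by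
  set p : ℤ → ENNReal := fun z => ℙ (X 1 ⁻¹' {z}) with hp
  set q : ℕ∞ → ENNReal := fun z => ℙ (w 1 ⁻¹' {z}) with hq
  have hXmeas : ∀ i, AEMeasurable (X i) ℙ := fun i => (hmeas i).aemeasurable
  have hw_meas : ∀ i, AEMeasurable (w i) ℙ := fun i => (hw_ident i).aemeasurable_fst
  have hw_ident' : ∀ i, IdentDistrib (w i) (w 1) ℙ ℙ :=
    fun i => (hw_ident i).trans (hw_ident 1).symm
  have hq_tau : ∀ z : ℕ∞, q z = ℙ {ω | tau X 0 ω = z} := by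
    intro z
    rw [hq]
    exact (hw_ident 1).measure_mem_eq (measurableSet_singleton z)
  have hq0 : q 0 = 0 := by
    rw [hq_tau]
    have hemp : {ω | tau X 0 ω = 0} = (∅ : Set Ω) := by
      ext ω
      simp only [Set.mem_setOf_eq, Set.mem_empty_iff_false, iff_false]
      rw [show (0 : ℕ∞) = ((0 : ℕ) : ℕ∞) from rfl, tau_eq_coe_iff]
      rintro ⟨h, -⟩
      omega
    rw [hemp]
    exact measure_empty
  have hqk : ∀ k : ℕ, 1 ≤ k → q (k : ℕ∞) = ∑' v : hitSet 0 k, Wt p v.1 := by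
    intro k _
    rw [hq_tau, tau_event_eq X 0 k,
      bridge X hXmeas hindep hident k (hitSet 0 k) (fun l hl => hl.1)]
  rw [joint_event_eq X x n ℓ,
    bridge X hXmeas hindep hident n (JSet x ℓ n) (fun l hl => hl.1),
    comb_main p q hq0 hqk hx hℓ n]
  refine Finset.sum_congr rfl fun m _ => ?_
  congr 1
  · rw [Om_event_eq w ℓ m,
      bridge w hw_meas hw_indep hw_ident' ℓ (BSet ℓ m) (fun t ht => ht.1)]
  · rw [tau_event_eq X x (n - m),
      bridge X hXmeas hindep hident (n - m) (hitSet x (n - m)) (fun l hl => hl.1)]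
end
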